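/- Let s, t be vertices of a k-connected graph G with st ∉ E and both s, t of degree > k. Then κ(s,t) = k if and only if (s lies in a small tight set and the minimal small tight set R_s containing s satisfies t ∈ R_s*) or (t lies in a small tight set and the minimal small tight set R_t containing t satisfies s ∈ R_t*). -/

import Mathlib

open Set

variable {V : Type*} [Fintype V] [DecidableEq V]

/-- The boundary (neighborhood) of a vertex set: vertices outside `A` adjacent to `A`. -/
def bdry (G : SimpleGraph V) (A : Set V) : Set V := {v | v ∉ A ∧ ∃ a ∈ A, G.Adj a v}

/-- The "node complement" `A* = V \ (A ∪ ∂A)`. -/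
def nstar (G : SimpleGraph V) (A : Set V) : Set V := (A ∪ bdry G A)ᶜ

/-- `C` is a vertex set separating `s` from `t`. -/
def IsSep (G : SimpleGraph V) (s t : V) (C : Set V) : Prop :=
  s ∉ C ∧ t ∉ C ∧ ∀ p : G.Walk s t, ∃ v ∈ C, v ∈ p.support

/-- `κ(s,t)`: minimum size of an `s`–`t` vertex cut. -/
noncomputable def kappa (G : SimpleGraph V) (s t : V) : ℕ :=
  sInf {n | ∃ C : Set V, C.ncard = n ∧ IsSep G s t C}

/-- A set is tight if `|∂A| = k` and `A* ≠ ∅`. -/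
def Tight (G : SimpleGraph V) (k : ℕ) (A : Set V) : Prop :=
  (bdry G A).ncard = k ∧ (nstar G A).Nonempty

/-- A set is small if `|A| ≤ (n - k)/2`. -/
def SmallSet (k : ℕ) (A : Set V) : Prop := 2 * A.ncard + k ≤ Fintype.card V

/-- `G` is `k`-connected. -/
def KConn (G : SimpleGraph V) (k : ℕ) : Prop :=
  k + 1 ≤ Fintype.card V ∧
    ∀ s t : V, s ≠ t → ∀ C : Set V, IsSep G s t C → k ≤ C.ncard

/-- degree of a vertex -/
noncomputable def deg (G : SimpleGraph V) (v : V) : ℕ := (G.neighborSet v).ncard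

/-- `X` is an `st`-tight set: `s ∈ X`, `t ∈ X*` and `|∂X| = κ(s,t)`. -/
def TightST (G : SimpleGraph V) (s t : V) (X : Set V) : Prop :=
  s ∈ X ∧ t ∈ nstar G X ∧ (bdry G X).ncard = kappa G s t

/-- `R_s`: intersection of all small tight sets containing `s`. -/
def Rmin (G : SimpleGraph V) (k : ℕ) (s : V) : Set V :=
  ⋂₀ {A : Set V | Tight G k A ∧ SmallSet k A ∧ s ∈ A}

/-- Two sets are laminar if disjoint or one contains the other. -/
def Laminar (X Y : Set V) : Prop := Disjoint X Y ∨ X ⊆ Y ∨ Y ⊆ X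

/-- `d`-degeneracy: every nonempty vertex subset has a vertex with at most `d`
neighbors inside it. -/
def Degenerate (G : SimpleGraph V) (d : ℕ) : Prop :=
  ∀ W : Set V, W.Nonempty → ∃ v ∈ W, (G.neighborSet v ∩ W).ncard ≤ d

/-- The set of vertices reachable from `s` avoiding `C`. -/
def Reach (G : SimpleGraph V) (C : Set V) (s : V) : Set V :=
  {v | ∃ p : G.Walk s v, ∀ u ∈ p.support, u ∉ C}

set_option linter.unusedSectionVars false
set_option linter.unusedVariables false

section AuxLemmas
variable {G : SimpleGraph V} {k : ℕ} {s t : V}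

lemma walk_cross {X : Set V} : ∀ {a b : V} (p : G.Walk a b), a ∈ X → b ∉ X →
    ∃ v ∈ bdry G X, v ∈ p.support := by
  intro a b p
  induction p with
  | nil => intro ha hb; exact absurd ha hb
  | @cons u v w h q ih =>
    intro ha hb
    by_cases hv : v ∈ X
    · obtain ⟨x, hx1, hx2⟩ := ih hv hb
      exact ⟨x, hx1, by simp [SimpleGraph.Walk.support_cons, hx2]⟩
    · exact ⟨v, ⟨hv, u, ha, h⟩, by simp [SimpleGraph.Walk.support_cons,
        SimpleGraph.Walk.start_mem_support]⟩

lemma mem_nstar {X : Set V} {v : V} : v ∈ nstar G X ↔ v ∉ X ∧ v ∉ bdry G X := by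
  simp [nstar]

lemma nstar_anti {A B : Set V} (h : A ⊆ B) : nstar G B ⊆ nstar G A := by
  apply compl_subset_compl.2
  rintro v (hv | ⟨hv, a, ha, hadj⟩)
  · exact Or.inl (h hv)
  · by_cases hvB : v ∈ B
    · exact Or.inl hvB
    · exact Or.inr ⟨hvB, a, h ha, hadj⟩

lemma isSep_bdry {X : Set V} (hs : s ∈ X) (ht : t ∈ nstar G X) :
    IsSep G s t (bdry G X) := by
  obtain ⟨ht1, ht2⟩ := mem_nstar.1 ht
  exact ⟨fun h => h.1 hs, ht2, fun p => walk_cross p hs ht1⟩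

lemma isSep_comm {C : Set V} (h : IsSep G s t C) : IsSep G t s C := by
  refine ⟨h.2.1, h.1, fun p => ?_⟩
  obtain ⟨v, hv1, hv2⟩ := h.2.2 p.reverse
  exact ⟨v, hv1, by simpa [SimpleGraph.Walk.support_reverse] using hv2⟩

lemma kconn_bdry (hG : KConn G k) {X : Set V} (hX : X.Nonempty)
    (hX' : (nstar G X).Nonempty) : k ≤ (bdry G X).ncard := by
  obtain ⟨a, ha⟩ := hX
  obtain ⟨b, hb⟩ := hX'
  have hab : a ≠ b := fun h => (mem_nstar.1 hb).1 (h ▸ ha)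
  exact hG.2 a b hab _ (isSep_bdry ha hb)

lemma submod (G : SimpleGraph V) (A B : Set V) :
    (bdry G (A ∩ B)).ncard + (bdry G (A ∪ B)).ncard ≤
      (bdry G A).ncard + (bdry G B).ncard := by
  set S1 := bdry G A with hS1
  set S2 := bdry G B with hS2
  have h1 : bdry G (A ∩ B) ⊆ (S1 ∩ B) ∪ ((S2 ∩ A) ∪ ((S1 ∩ S2) \ (A ∪ B))) := by
    rintro v ⟨hv, a, ⟨haA, haB⟩, hadj⟩
    by_cases hvB : v ∈ B
    · exact Or.inl ⟨⟨fun hvA => hv ⟨hvA, hvB⟩, a, haA, hadj⟩, hvB⟩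
    by_cases hvA : v ∈ A
    · exact Or.inr (Or.inl ⟨⟨hvB, a, haB, hadj⟩, hvA⟩)
    · exact Or.inr (Or.inr ⟨⟨⟨hvA, a, haA, hadj⟩, ⟨hvB, a, haB, hadj⟩⟩,
        fun h => h.elim hvA hvB⟩)
  have h2 : bdry G (A ∪ B) ⊆ (S1 ∪ S2) \ (A ∪ B) := by
    rintro v ⟨hv, a, (ha | ha), hadj⟩
    · exact ⟨Or.inl ⟨fun h => hv (Or.inl h), a, ha, hadj⟩, hv⟩
    · exact ⟨Or.inr ⟨fun h => hv (Or.inr h), a, ha, hadj⟩, hv⟩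
  have e1 : (S1 ∩ S2) \ (A ∪ B) = (S1 \ (A ∪ B)) ∩ (S2 \ (A ∪ B)) := by
    ext v; simp [mem_diff]; tauto
  have e2 : (S1 ∪ S2) \ (A ∪ B) = (S1 \ (A ∪ B)) ∪ (S2 \ (A ∪ B)) := by
    ext v; simp [mem_diff]; tauto
  have key : ((S1 ∩ S2) \ (A ∪ B)).ncard + ((S1 ∪ S2) \ (A ∪ B)).ncard =
      (S1 \ (A ∪ B)).ncard + (S2 \ (A ∪ B)).ncard := by
    rw [e1, e2]; exact Set.ncard_inter_add_ncard_union _ _ (toFinite _) (toFinite _)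
  have d1 : (S1 ∩ B).ncard + (S1 \ (A ∪ B)).ncard ≤ S1.ncard := by
    rw [← Set.ncard_union_eq (by
      rw [Set.disjoint_left]; rintro v ⟨_, hvB⟩ ⟨_, hv⟩; exact hv (Or.inr hvB))
      (toFinite _) (toFinite _)]
    exact Set.ncard_le_ncard (by rintro v (⟨h, _⟩ | ⟨h, _⟩) <;> exact h) (toFinite _)
  have d2 : (S2 ∩ A).ncard + (S2 \ (A ∪ B)).ncard ≤ S2.ncard := by
    rw [← Set.ncard_union_eq (by
      rw [Set.disjoint_left]; rintro v ⟨_, hvA⟩ ⟨_, hv⟩; exact hv (Or.inl hvA))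
      (toFinite _) (toFinite _)]
    exact Set.ncard_le_ncard (by rintro v (⟨h, _⟩ | ⟨h, _⟩) <;> exact h) (toFinite _)
  have c1 : (bdry G (A ∩ B)).ncard ≤
      (S1 ∩ B).ncard + ((S2 ∩ A).ncard + ((S1 ∩ S2) \ (A ∪ B)).ncard) :=
    le_trans (Set.ncard_le_ncard h1 (toFinite _))
      (le_trans (Set.ncard_union_le _ _)
        (by gcongr; exact Set.ncard_union_le _ _))
  have c2 : (bdry G (A ∪ B)).ncard ≤ ((S1 ∪ S2) \ (A ∪ B)).ncard :=
    Set.ncard_le_ncard h2 (toFinite _)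
  omega

lemma inter_tight (hG : KConn G k) {A B : Set V}
    (hA : Tight G k A ∧ SmallSet k A ∧ s ∈ A)
    (hB : Tight G k B ∧ SmallSet k B ∧ s ∈ B) :
    Tight G k (A ∩ B) ∧ SmallSet k (A ∩ B) ∧ s ∈ A ∩ B := by
  obtain ⟨⟨hAb, hAn⟩, hAs, hsA⟩ := hA
  obtain ⟨⟨hBb, hBn⟩, hBs, hsB⟩ := hB
  have hsAB : s ∈ A ∩ B := ⟨hsA, hsB⟩
  have hnin : (nstar G (A ∩ B)).Nonempty := hAn.mono (nstar_anti inter_subset_left)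
  have hsmall : SmallSet k (A ∩ B) := by
    have := Set.ncard_le_ncard (inter_subset_left (s := A) (t := B)) (toFinite _)
    unfold SmallSet at hAs ⊢; omega
  have hk1 : k ≤ (bdry G (A ∩ B)).ncard := kconn_bdry hG ⟨s, hsAB⟩ hnin
  have hsub := submod G A B
  rw [hAb, hBb] at hsub
  -- |A ∪ B| bound
  have hcardU : (A ∪ B).ncard + (A ∩ B).ncard = A.ncard + B.ncard := by
    have := Set.ncard_inter_add_ncard_union A B (toFinite _) (toFinite _)
    omega
  have hABpos : 1 ≤ (A ∩ B).ncard := Set.ncard_pos (toFinite _)|>.2 ⟨s, hsAB⟩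
  have hUle : (A ∪ B).ncard + k + 1 ≤ Fintype.card V := by
    unfold SmallSet at hAs hBs; omega
  have hUn : (nstar G (A ∪ B)).Nonempty := by
    rw [Set.nonempty_iff_ne_empty]
    intro hemp
    have : (A ∪ B) ∪ bdry G (A ∪ B) = univ := by
      rw [← compl_empty_iff, ← hemp]; rfl
    have hcard : ((A ∪ B) ∪ bdry G (A ∪ B)).ncard = Fintype.card V := by
      rw [this, Set.ncard_univ, Nat.card_eq_fintype_card]
    have hle : ((A ∪ B) ∪ bdry G (A ∪ B)).ncard ≤ (A ∪ B).ncard + (bdry G (A ∪ B)).ncard :=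
      Set.ncard_union_le _ _
    omega
  have hk2 : k ≤ (bdry G (A ∪ B)).ncard := kconn_bdry hG ⟨s, Or.inl hsA⟩ hUn
  have hbd : (bdry G (A ∩ B)).ncard = k := by omega
  exact ⟨⟨hbd, hnin⟩, hsmall, hsAB⟩

lemma rmin_mem (hG : KConn G k)
    (hne : ∃ A : Set V, Tight G k A ∧ SmallSet k A ∧ s ∈ A) :
    Tight G k (Rmin G k s) ∧ SmallSet k (Rmin G k s) ∧ s ∈ Rmin G k s := by
  classical
  set F : Set (Set V) := {A : Set V | Tight G k A ∧ SmallSet k A ∧ s ∈ A} with hF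
  obtain ⟨M, hM, hmin⟩ : ∃ M ∈ F, ∀ a' ∈ F, id a' ≤ id M → id a' = id M := by
    obtain ⟨M, hM, hmin⟩ := (Set.toFinite F).exists_minimalFor id F hne
    exact ⟨M, hM, fun a' ha' hle => le_antisymm hle (hmin ha' hle)⟩
  have hMsub : ∀ A ∈ F, M ⊆ A := by
    intro A hA
    have hinter : M ∩ A ∈ F := inter_tight hG hM hA
    have heq := hmin (M ∩ A) hinter inter_subset_left
    simp only [id_eq] at heq
    intro v hv
    exact (show v ∈ M ∩ A by rw [heq]; exact hv).2
  have : Rmin G k s = M := by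
    apply subset_antisymm (sInter_subset_of_mem hM)
    exact subset_sInter hMsub
  rw [this]; exact hM

lemma sep_set_nonempty (hst : ¬ G.Adj s t) (hne : s ≠ t) :
    {n | ∃ C : Set V, C.ncard = n ∧ IsSep G s t C}.Nonempty := by
  refine ⟨({s, t} : Set V)ᶜ.ncard, ({s, t} : Set V)ᶜ, rfl, ?_, ?_, ?_⟩
  · simp
  · simp
  · intro p
    cases p with
    | nil => exact absurd rfl hne
    | cons h q =>
      rename_i v
      refine ⟨v, ?_, by simp [SimpleGraph.Walk.support_cons,
        SimpleGraph.Walk.start_mem_support]⟩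
      simp only [mem_compl_iff, mem_insert_iff, mem_singleton_iff]
      push_neg
      exact ⟨fun hv => G.irrefl (hv ▸ h), fun hv => hst (hv ▸ h)⟩

lemma reach_tight (hG : KConn G k) {C : Set V} (hC : IsSep G s t C)
    (hCk : C.ncard = k) :
    s ∈ Reach G C s ∧ t ∈ nstar G (Reach G C s) ∧ Tight G k (Reach G C s) ∧
      bdry G (Reach G C s) ⊆ C ∧ Disjoint (Reach G C s) C := by
  obtain ⟨hsC, htC, hsep⟩ := hC
  have hsR : s ∈ Reach G C s := ⟨SimpleGraph.Walk.nil, by simp [hsC]⟩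
  have hdisC : Disjoint (Reach G C s) C := by
    rw [Set.disjoint_left]
    rintro v ⟨p, hp⟩ hvC
    exact hp v p.end_mem_support hvC
  have hbsub : bdry G (Reach G C s) ⊆ C := by
    rintro v ⟨hv, a, ⟨p, hp⟩, hadj⟩
    by_contra hvC
    refine hv ⟨p.concat hadj, ?_⟩
    intro u hu
    rw [SimpleGraph.Walk.support_concat, List.mem_append] at hu
    rcases hu with hu | hu
    · exact hp u hu
    · simp at hu; subst hu; exact hvC
  have htR : t ∉ Reach G C s := by
    rintro ⟨p, hp⟩
    obtain ⟨v, hv1, hv2⟩ := hsep p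
    exact hp v hv2 hv1
  have htn : t ∈ nstar G (Reach G C s) :=
    mem_nstar.2 ⟨htR, fun h => htC (hbsub h)⟩
  have hk : k ≤ (bdry G (Reach G C s)).ncard := kconn_bdry hG ⟨s, hsR⟩ ⟨t, htn⟩
  have hle : (bdry G (Reach G C s)).ncard ≤ k := hCk ▸ Set.ncard_le_ncard hbsub (toFinite _)
  exact ⟨hsR, htn, ⟨le_antisymm hle hk, ⟨t, htn⟩⟩, hbsub, hdisC⟩

end AuxLemmas

theorem stmt3 (G : SimpleGraph V) (k : ℕ) (s t : V) (hG : KConn G k)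
    (hst : ¬ G.Adj s t) (hne : s ≠ t) (hds : k < deg G s) (hdt : k < deg G t) :
    kappa G s t = k ↔
      ((∃ A : Set V, Tight G k A ∧ SmallSet k A ∧ s ∈ A) ∧ t ∈ nstar G (Rmin G k s)) ∨
      ((∃ A : Set V, Tight G k A ∧ SmallSet k A ∧ t ∈ A) ∧ s ∈ nstar G (Rmin G k t)) := by
  constructor
  · intro hkap
    -- extract a separator of size k
    have hmem : kappa G s t ∈ {n | ∃ C : Set V, C.ncard = n ∧ IsSep G s t C} :=
      Nat.sInf_mem (sep_set_nonempty hst hne)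
    obtain ⟨C, hCk, hC⟩ := hmem
    rw [hkap] at hCk
    obtain ⟨hsA, htnA, hAt, hAb, hAC⟩ := reach_tight hG hC hCk
    obtain ⟨htB, hsnB, hBt, hBb, hBC⟩ := reach_tight hG (isSep_comm hC) hCk
    set A := Reach G C s
    set B := Reach G C t
    have hABdis : Disjoint A B := by
      rw [Set.disjoint_left]
      rintro v ⟨p, hp⟩ ⟨q, hq⟩
      obtain ⟨w, hw1, hw2⟩ := hC.2.2 (p.append q.reverse)
      rw [SimpleGraph.Walk.mem_support_append_iff] at hw2
      rcases hw2 with hw2 | hw2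
      · exact hp w hw2 hw1
      · rw [SimpleGraph.Walk.support_reverse, List.mem_reverse] at hw2
        exact hq w hw2 hw1
    have hcard : A.ncard + B.ncard + k ≤ Fintype.card V := by
      have h1 : (A ∪ B ∪ C).ncard ≤ Fintype.card V := by
        have := Set.ncard_le_ncard (subset_univ (A ∪ B ∪ C)) (toFinite _)
        rwa [Set.ncard_univ, Nat.card_eq_fintype_card] at this
      have h2 : (A ∪ B ∪ C).ncard = A.ncard + B.ncard + C.ncard := by
        rw [Set.ncard_union_eq (by
            rw [Set.disjoint_union_left]; exact ⟨hAC, hBC⟩) (toFinite _) (toFinite _),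
          Set.ncard_union_eq hABdis (toFinite _) (toFinite _)]
      omega
    have hsmall : SmallSet k A ∨ SmallSet k B := by
      unfold SmallSet; omega
    rcases hsmall with hsm | hsm
    · left
      have hAF : Tight G k A ∧ SmallSet k A ∧ s ∈ A := ⟨hAt, hsm, hsA⟩
      exact ⟨⟨A, hAF⟩, nstar_anti (sInter_subset_of_mem hAF) htnA⟩
    · right
      have hBF : Tight G k B ∧ SmallSet k B ∧ t ∈ B := ⟨hBt, hsm, htB⟩
      exact ⟨⟨B, hBF⟩, nstar_anti (sInter_subset_of_mem hBF) hsnB⟩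
  · intro h
    have hsep : ∃ C : Set V, C.ncard = k ∧ IsSep G s t C := by
      rcases h with ⟨hex, htn⟩ | ⟨hex, hsn⟩
      · obtain ⟨⟨hbk, _⟩, _, hsR⟩ := rmin_mem hG hex
        exact ⟨bdry G (Rmin G k s), hbk, isSep_bdry hsR htn⟩
      · obtain ⟨⟨hbk, _⟩, _, htR⟩ := rmin_mem hG hex
        exact ⟨bdry G (Rmin G k t), hbk, isSep_comm (isSep_bdry htR hsn)⟩
    obtain ⟨C, hCk, hC⟩ := hsep
    have hle : kappa G s t ≤ k := Nat.sInf_le ⟨C, hCk, hC⟩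
    have hge : k ≤ kappa G s t := by
      have hmem : kappa G s t ∈ {n | ∃ C : Set V, C.ncard = n ∧ IsSep G s t C} :=
        Nat.sInf_mem ⟨k, C, hCk, hC⟩
      obtain ⟨C0, hC0k, hC0⟩ := hmem
      exact hC0k ▸ hG.2 s t hne C0 hC0
    omega
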